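/- Let Y, T, S be {0,1}-valued random variables with a joint distribution such that P(T=t, S=s) > 0 for all t,s ∈ {0,1} and P(Y=1|T=t, S=s) > 0 for all t,s. If P(Y=1|T=t,S=1) ≠ P(Y=1|T=t,S=0) for both t = 0 and t = 1, then the selection bias for the relative risk satisfies the strict inequality β_R^{obs}/β_R < [P(Y=1|T=1,S=1)/P(Y=1|T=0,S=1)] · [(max_{s∈{0,1}} P(Y=1|T=0,S=s)) / (min_{s∈{0,1}} P(Y=1|T=1,S=s))]. In particular, since this intermediate quantity is at most the Smith–VanderWeele bound BF₁·BF₀, the bias can never equal BF₁·BF₀, i.e., the SV bound for the relative risk in the total population is not sharp under this condition. -/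

import Mathlib

/-- `P y t s` is the joint pmf of `(Y, T, S)` (with `true` encoding `1`);
`pYgT P t` is `P(Y = 1 | T = t)`. -/
noncomputable def pYgT (P : Bool → Bool → Bool → ℝ) (t : Bool) : ℝ :=
  (∑ s : Bool, P true t s) / (∑ y : Bool, ∑ s : Bool, P y t s)

/-- `pYgTS P t s` is `P(Y = 1 | T = t, S = s)`. -/
noncomputable def pYgTS (P : Bool → Bool → Bool → ℝ) (t s : Bool) : ℝ :=
  P true t s / (∑ y : Bool, P y t s)

/-- If `P(Y=1|T=t,S=1) ≠ P(Y=1|T=t,S=0)` for both `t = 0, 1`, then the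
selection bias for the relative risk satisfies the strict inequality
`β_R^{obs}/β_R < β_R^{obs} · (max_s P(Y=1|T=0,S=s))/(min_s P(Y=1|T=1,S=s))`;
in particular the bias can never equal any quantity (such as the
Smith–VanderWeele bound `BF₁·BF₀`) that is at least this intermediate
quantity, so the SV bound for the relative risk in the total population is
not sharp. -/
lemma mediant_strict {x y d1 d0 : ℝ} (h1 : 0 < d1) (h0 : 0 < d0)
    (hne : x / d1 ≠ y / d0) :
    min (x / d1) (y / d0) < (x + y) / (d1 + d0) ∧
      (x + y) / (d1 + d0) < max (x / d1) (y / d0) := by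
  have hd : 0 < d1 + d0 := by linarith
  rcases lt_or_gt_of_ne hne with h | h
  · have hxy : x * d0 < y * d1 := by
      rw [div_lt_div_iff₀ h1 h0] at h; linarith
    constructor
    · rw [min_eq_left h.le, div_lt_div_iff₀ h1 hd]; nlinarith
    · rw [max_eq_right h.le, div_lt_div_iff₀ hd h0]; nlinarith
  · have hxy : y * d1 < x * d0 := by
      rw [div_lt_div_iff₀ h0 h1] at h; nlinarith
    constructor
    · rw [min_eq_right h.le, div_lt_div_iff₀ h0 hd]; nlinarith
    · rw [max_eq_left h.le, div_lt_div_iff₀ hd h1]; nlinarith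

theorem stmt18 (P : Bool → Bool → Bool → ℝ)
    (hpos : ∀ y t s, 0 ≤ P y t s)
    (hsum : ∑ y : Bool, ∑ t : Bool, ∑ s : Bool, P y t s = 1)
    (hTS : ∀ t s, 0 < ∑ y : Bool, P y t s)
    (hY : ∀ t s, 0 < pYgTS P t s)
    (hne : ∀ t, pYgTS P t true ≠ pYgTS P t false) :
    (pYgTS P true true / pYgTS P false true) / (pYgT P true / pYgT P false) <
      (pYgTS P true true / pYgTS P false true) *
        (max (pYgTS P false true) (pYgTS P false false) /
          min (pYgTS P true true) (pYgTS P true false)) ∧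
    ∀ BF : ℝ,
      (pYgTS P true true / pYgTS P false true) *
          (max (pYgTS P false true) (pYgTS P false false) /
            min (pYgTS P true true) (pYgTS P true false)) ≤ BF →
      (pYgTS P true true / pYgTS P false true) /
        (pYgT P true / pYgT P false) ≠ BF := by
  have key : ∀ t, min (pYgTS P t true) (pYgTS P t false) < pYgT P t ∧
      pYgT P t < max (pYgTS P t true) (pYgTS P t false) := by
    intro t
    have hd1 := hTS t true
    have hd0 := hTS t false
    simp only [Fintype.sum_bool] at hd1 hd0
    have hne' : P true t true / (P true t true + P false t true) ≠
        P true t false / (P true t false + P false t false) := by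
      simpa [pYgTS, Fintype.sum_bool] using hne t
    have h := mediant_strict hd1 hd0 hne'
    have e1 : pYgTS P t true = P true t true / (P true t true + P false t true) := by
      simp [pYgTS, Fintype.sum_bool]
    have e0 : pYgTS P t false = P true t false / (P true t false + P false t false) := by
      simp [pYgTS, Fintype.sum_bool]
    have e : pYgT P t = (P true t true + P true t false) /
        ((P true t true + P false t true) + (P true t false + P false t false)) := by
      simp only [pYgT, Fintype.sum_bool]
      ring_nf
    rw [e1, e0, e]; exact h
  set A := pYgTS P true true
  set B := pYgTS P false true
  set m1 := min (pYgTS P true true) (pYgTS P true false) with hm1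
  set M0 := max (pYgTS P false true) (pYgTS P false false) with hM0
  have hApos : 0 < A := hY true true
  have hBpos : 0 < B := hY false true
  have hm1pos : 0 < m1 := lt_min (hY true true) (hY true false)
  have hR1 : m1 < pYgT P true := (key true).1
  have hR0 : pYgT P false < M0 := (key false).2
  have hR1pos : 0 < pYgT P true := lt_trans hm1pos hR1
  have hR0pos : 0 < pYgT P false :=
    lt_trans (lt_min (hY false true) (hY false false)) (key false).1
  have hmain : (A / B) / (pYgT P true / pYgT P false) < (A / B) * (M0 / m1) := by
    rw [div_div_eq_mul_div, mul_div_assoc]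
    apply mul_lt_mul_of_pos_left _ (div_pos hApos hBpos)
    rw [div_lt_div_iff₀ hR1pos hm1pos]
    nlinarith
  exact ⟨hmain, fun BF hBF => ne_of_lt (lt_of_lt_of_le hmain hBF)⟩
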